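/- The subchain-2 stationary probability of state s+n1 satisfies the exact formula 1/π^2_{s+n1} = Σ_{k=0}^{n2} Π_{j=1}^{k} λ/(s·μ + n1·θ1 + j·θ2), where the empty product (k = 0) equals 1. (Third formula of equation (7)/(exact).) -/

import Mathlib

open Finset

/-- Departure rate of the two-stage reneging birth-death chain. -/
noncomputable def depRate (s n1 : ℕ) (μ θ1 θ2 : ℝ) (k : ℕ) : ℝ :=
  if k ≤ s then (k : ℝ) * μ
  else if k ≤ s + n1 then (s : ℝ) * μ + ((k : ℝ) - (s : ℝ)) * θ1
  else (s : ℝ) * μ + (n1 : ℝ) * θ1 + ((k : ℝ) - (s : ℝ) - (n1 : ℝ)) * θ2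

/-- Stationary probability of state `k` in the subchain with state set `A`. -/
noncomputable def subProb (π : ℕ → ℝ) (A : Finset ℕ) (k : ℕ) : ℝ :=
  π k / ∑ k' ∈ A, π k'

theorem stmt_11 (lam μ θ1 θ2 : ℝ) (hlam : 0 < lam) (hμ : 0 < μ)
    (hθ1 : 0 < θ1) (hθ2 : 0 < θ2) (s n1 n2 : ℕ) (hs : 1 ≤ s) (π : ℕ → ℝ)
    (hpos : ∀ k ∈ Finset.Icc 0 (s + n1 + n2), 0 < π k)
    (hbal : ∀ k, 1 ≤ k → k ≤ s + n1 + n2 →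
      π k * depRate s n1 μ θ1 θ2 k = π (k - 1) * lam)
    (hsum : ∑ k ∈ Finset.Icc 0 (s + n1 + n2), π k = 1) :
    1 / (subProb π (Finset.Icc (s + n1) (s + n1 + n2)) (s + n1)) =
      ∑ k ∈ Finset.range (n2 + 1),
        ∏ j ∈ Finset.Icc 1 k, lam / ((s : ℝ) * μ + (n1 : ℝ) * θ1 + (j : ℝ) * θ2) := by
  have hbase : 0 < π (s + n1) := hpos _ (by simp [Nat.le_add_right])
  -- key: ratio formula
  have key : ∀ k, k ≤ n2 → π (s + n1 + k) =
      π (s + n1) * ∏ j ∈ Finset.Icc 1 k, lam / ((s : ℝ) * μ + (n1 : ℝ) * θ1 + (j : ℝ) * θ2) := by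
    intro k hk
    induction k with
    | zero => simp
    | succ k ih =>
      have hk' : k ≤ n2 := Nat.le_of_succ_le hk
      have hm1 : 1 ≤ s + n1 + (k + 1) := by omega
      have hm2 : s + n1 + (k + 1) ≤ s + n1 + n2 := by omega
      have hrate : depRate s n1 μ θ1 θ2 (s + n1 + (k + 1)) =
          (s : ℝ) * μ + (n1 : ℝ) * θ1 + ((k : ℝ) + 1) * θ2 := by
        unfold depRate
        rw [if_neg (by omega), if_neg (by omega)]
        push_cast
        ring
      have hratepos : 0 < (s : ℝ) * μ + (n1 : ℝ) * θ1 + ((k : ℝ) + 1) * θ2 := by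
        have h1 : (0:ℝ) < (s:ℝ) * μ := by positivity
        have h2 : (0:ℝ) ≤ (n1:ℝ) * θ1 := by positivity
        have h3 : (0:ℝ) < ((k:ℝ) + 1) * θ2 := by positivity
        linarith
      have hb := hbal (s + n1 + (k + 1)) hm1 hm2
      rw [hrate] at hb
      have hprev : s + n1 + (k + 1) - 1 = s + n1 + k := by omega
      rw [hprev] at hb
      have : π (s + n1 + (k + 1)) =
          π (s + n1 + k) * (lam / ((s : ℝ) * μ + (n1 : ℝ) * θ1 + ((k : ℝ) + 1) * θ2)) := by
        field_simp
        linarith [hb]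
      rw [this, ih hk', Finset.prod_Icc_succ_top (by omega : 1 ≤ k + 1)]
      push_cast
      ring
  -- sum over the subchain
  have hsum2 : ∑ k' ∈ Finset.Icc (s + n1) (s + n1 + n2), π k' =
      π (s + n1) * ∑ k ∈ Finset.range (n2 + 1),
        ∏ j ∈ Finset.Icc 1 k, lam / ((s : ℝ) * μ + (n1 : ℝ) * θ1 + (j : ℝ) * θ2) := by
    rw [Finset.mul_sum]
    rw [show Finset.Icc (s + n1) (s + n1 + n2) = Finset.map
        ⟨fun k => s + n1 + k, fun a b h => Nat.add_left_cancel h⟩ (Finset.range (n2 + 1)) from ?_]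
    · rw [Finset.sum_map]
      refine Finset.sum_congr rfl fun k hk => ?_
      change π (s + n1 + k) = _
      exact key k (Nat.lt_succ_iff.mp (Finset.mem_range.mp hk))
    · ext x
      simp [Finset.mem_map, Nat.lt_succ_iff]
      constructor
      · rintro ⟨h1, h2⟩; exact ⟨x - (s + n1), by omega, by change s + n1 + (x - (s + n1)) = x; omega⟩
      · rintro ⟨a, ha, rfl⟩; exact ⟨by change s + n1 ≤ s + n1 + a; omega, by change s + n1 + a ≤ s + n1 + n2; omega⟩
  rw [subProb, hsum2, one_div_div, mul_comm, mul_div_assoc, div_self (ne_of_gt hbase), mul_one]
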